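/- There exists ε > 0 with the following property. For all real numbers a, b, c ∈ (1−ε, 1+ε), the six-point set {e₁⁺, e₁⁻, e₂⁺, e₂⁻, e₃⁺, e₃⁻} with the symmetric distance function |·| defined by: |eᵢ⁺eᵢ⁻| = 1 for i = 1,2,3; |e₁⁺e₂⁺| = |e₁⁺e₂⁻| = a/√2 and |e₁⁻e₂⁺| = |e₁⁻e₂⁻| = 1/(a√2); |e₂⁺e₃⁺| = |e₂⁺e₃⁻| = b/√2 and |e₂⁻e₃⁺| = |e₂⁻e₃⁻| = 1/(b√2); |e₃⁺e₁⁺| = |e₃⁺e₁⁻| = c/√2 and |e₃⁻e₁⁺| = |e₃⁻e₁⁻| = 1/(c√2); is a metric space (the triangle inequality holds) and satisfies the Ptolemy inequality. Moreover, for each of the three four-point configurations {e₁±, e₂±}, {e₂±, e₃±}, {e₃±, e₁±}, equality holds in the Ptolemy inequality with the pairs eᵢ⁺eᵢ⁻ as diagonals. -/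

import Mathlib

/-- The six-point distance function on `{e₁⁺,e₁⁻,e₂⁺,e₂⁻,e₃⁺,e₃⁻}`, modelled on
`Fin 3 × Bool` (the point `eᵢ^±` is `(i−1, ±)` with `+` as `true`): antipodal pairs have
distance `1`; for the pair of indices `{i, i+1}` (cyclically, with parameters
`a, b, c` attached to indices `1, 2, 3`), the distance is `par i/√2` if the index-`i`
point has sign `+`, and `1/(par i·√2)` if it has sign `−`. -/
noncomputable def exDist (a b c : ℝ) : Fin 3 × Bool → Fin 3 × Bool → ℝ := fun p q =>
  let par : Fin 3 → ℝ := ![a, b, c]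
  if p.1 = q.1 then (if p.2 = q.2 then 0 else 1)
  else if q.1 = p.1 + 1 then
    (if p.2 then par p.1 / Real.sqrt 2 else 1 / (par p.1 * Real.sqrt 2))
  else
    (if q.2 then par q.1 / Real.sqrt 2 else 1 / (par q.1 * Real.sqrt 2))

/-- For `a, b, c` close enough to `1`, the six-point space above is a metric space, it
satisfies the Ptolemy inequality, and for each of the three four-point configurations
`{eᵢ±, eⱼ±}` (`{i,j} = {1,2}, {2,3}, {3,1}`) equality holds in the Ptolemy inequality with
the antipodal pairs `eᵢ⁺eᵢ⁻`, `eⱼ⁺eⱼ⁻` as diagonals. -/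
lemma sixPt.aux_lb {t : ℝ} (h1 : 99/100 < t) (h2 : t < 101/100) :
    7/10 ≤ t / Real.sqrt 2 ∧ t / Real.sqrt 2 ≤ 18/25 ∧
    7/10 ≤ 1/(t * Real.sqrt 2) ∧ 1/(t * Real.sqrt 2) ≤ 18/25 := by
  have hs : Real.sqrt 2 * Real.sqrt 2 = 2 := Real.mul_self_sqrt (by norm_num)
  have hs0 : (0:ℝ) < Real.sqrt 2 := Real.sqrt_pos.2 (by norm_num)
  have ht : (0:ℝ) < t := by linarith
  have hsu : Real.sqrt 2 < 14143/10000 := by nlinarith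
  have hsl : 14142/10000 < Real.sqrt 2 := by nlinarith
  have hts : (0:ℝ) < t * Real.sqrt 2 := by positivity
  refine ⟨?_, ?_, ?_, ?_⟩
  · rw [le_div_iff₀ hs0]; nlinarith
  · rw [div_le_iff₀ hs0]; nlinarith
  · rw [le_div_iff₀ hts]; nlinarith
  · rw [div_le_iff₀ hts]; nlinarith

lemma sixPt.symm (a b c : ℝ) (p q : Fin 3 × Bool) :
    exDist a b c p q = exDist a b c q p := by
  obtain ⟨i, si⟩ := p; obtain ⟨j, sj⟩ := q
  fin_cases i <;> fin_cases j <;> simp [exDist] <;> cases si <;> cases sj <;> simp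

lemma sixPt.same (a b c : ℝ) {p q : Fin 3 × Bool} (h : p.1 = q.1) :
    exDist a b c p q = if p.2 = q.2 then 0 else 1 := by
  simp [exDist, h]

section

variable {a b c : ℝ}
  (H : ∀ i : Fin 3, 99/100 < ![a,b,c] i ∧ ![a,b,c] i < 101/100)

include H

lemma sixPt.cross {p q : Fin 3 × Bool} (h : p.1 ≠ q.1) :
    7/10 ≤ exDist a b c p q ∧ exDist a b c p q ≤ 18/25 := by
  simp only [exDist, if_neg h]
  by_cases h1 : q.1 = p.1 + 1
  · obtain ⟨B1, B2, B3, B4⟩ := sixPt.aux_lb (H p.1).1 (H p.1).2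
    simp only [if_pos h1]
    cases hp : p.2 <;>
      simp only [ite_true, ite_false, Bool.false_eq_true, if_false, if_true] <;>
      exact ⟨by assumption, by assumption⟩
  · obtain ⟨B1, B2, B3, B4⟩ := sixPt.aux_lb (H q.1).1 (H q.1).2
    simp only [if_neg h1]
    cases hq : q.2 <;>
      simp only [ite_true, ite_false, Bool.false_eq_true, if_false, if_true] <;>
      exact ⟨by assumption, by assumption⟩

lemma sixPt.antip {p q : Fin 3 × Bool} (h : p.1 ≠ q.1) :
    exDist a b c p q * exDist a b c (p.1, !p.2) (q.1, !q.2) = 1/2 := by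
  have hs : Real.sqrt 2 * Real.sqrt 2 = 2 := Real.mul_self_sqrt (by norm_num)
  have hs0 : (0:ℝ) < Real.sqrt 2 := Real.sqrt_pos.2 (by norm_num)
  simp only [exDist, if_neg h]
  by_cases h1 : q.1 = p.1 + 1
  · have ht := (H p.1).1
    simp only [if_pos h1]
    cases hp : p.2 <;> simp [hp] <;> field_simp <;> nlinarith [ht, hs]
  · have ht := (H q.1).1
    simp only [if_neg h1]
    cases hq : q.2 <;> simp [hq] <;> field_simp <;> nlinarith [ht, hs]

lemma sixPt.lb {p q : Fin 3 × Bool} (h : p ≠ q) : 7/10 ≤ exDist a b c p q := by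
  rcases eq_or_ne p.1 q.1 with h1 | h1
  · rw [sixPt.same a b c h1, if_neg]
    · norm_num
    · exact fun h2 => h (Prod.ext h1 h2)
  · exact (sixPt.cross H h1).1

lemma sixPt.ub (p q : Fin 3 × Bool) : exDist a b c p q ≤ 1 := by
  rcases eq_or_ne p.1 q.1 with h1 | h1
  · rw [sixPt.same a b c h1]; split_ifs <;> norm_num
  · linarith [(sixPt.cross H h1).2]

lemma sixPt.nonneg (p q : Fin 3 × Bool) : 0 ≤ exDist a b c p q := by
  rcases eq_or_ne p.1 q.1 with h1 | h1
  · rw [sixPt.same a b c h1]; split_ifs <;> norm_num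
  · linarith [(sixPt.cross H h1).1]

lemma sixPt.eq_zero {p q : Fin 3 × Bool} : exDist a b c p q = 0 ↔ p = q := by
  rcases eq_or_ne p.1 q.1 with h1 | h1
  · rw [sixPt.same a b c h1]
    constructor
    · intro h2
      split_ifs at h2 with h3
      · exact Prod.ext h1 h3
      · norm_num at h2
    · intro h2; subst h2; simp
  · constructor
    · intro h2; exfalso; linarith [(sixPt.cross H h1).1]
    · intro h2; exact absurd (congrArg Prod.fst h2) h1

end
section

variable {a b c : ℝ}
  (H : ∀ i : Fin 3, 99/100 < ![a,b,c] i ∧ ![a,b,c] i < 101/100)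

include H

lemma sixPt.triangle (p q r : Fin 3 × Bool) :
    exDist a b c p r ≤ exDist a b c p q + exDist a b c q r := by
  by_cases hpq : p = q
  · subst hpq
    rw [(sixPt.eq_zero H).2 rfl, zero_add]
  by_cases hqr : q = r
  · subst hqr
    rw [(sixPt.eq_zero H).2 rfl, add_zero]
  by_cases hpr : p = r
  · rw [(sixPt.eq_zero H).2 hpr]
    linarith [sixPt.nonneg H p q, sixPt.nonneg H q r]
  · linarith [sixPt.ub H p r, sixPt.lb H hpq, sixPt.lb H hqr]

lemma sixPt.ptolemy (y₁ y₂ y₃ y₄ : Fin 3 × Bool) :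
    exDist a b c y₁ y₃ * exDist a b c y₂ y₄ ≤
      exDist a b c y₁ y₂ * exDist a b c y₃ y₄ +
        exDist a b c y₂ y₃ * exDist a b c y₄ y₁ := by
  by_cases h13 : y₁ = y₃
  · rw [(sixPt.eq_zero H).2 h13, zero_mul]
    have := mul_nonneg (sixPt.nonneg H y₁ y₂) (sixPt.nonneg H y₃ y₄)
    have := mul_nonneg (sixPt.nonneg H y₂ y₃) (sixPt.nonneg H y₄ y₁)
    linarith
  by_cases h24 : y₂ = y₄
  · rw [(sixPt.eq_zero H).2 h24, mul_zero]
    have := mul_nonneg (sixPt.nonneg H y₁ y₂) (sixPt.nonneg H y₃ y₄)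
    have := mul_nonneg (sixPt.nonneg H y₂ y₃) (sixPt.nonneg H y₄ y₁)
    linarith
  by_cases h12 : y₁ = y₂
  · rw [h12, (sixPt.eq_zero H).2 rfl, sixPt.symm a b c y₄ y₂]
    linarith
  by_cases h23 : y₂ = y₃
  · rw [h23, (sixPt.eq_zero H).2 rfl]
    linarith
  by_cases h34 : y₃ = y₄
  · rw [h34, (sixPt.eq_zero H).2 rfl, sixPt.symm a b c y₄ y₁]
    linarith
  by_cases h41 : y₄ = y₁
  · rw [h41, (sixPt.eq_zero H).2 rfl, sixPt.symm a b c y₂ y₁, sixPt.symm a b c y₃ y₁]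
    linarith
  -- all six points pairwise involved distinct
  by_cases hd : y₁.1 = y₃.1 ∧ y₂.1 = y₄.1
  · obtain ⟨hA, hB⟩ := hd
    have h3 : y₃ = (y₁.1, !y₁.2) := by
      have h3' : y₃.2 = !y₁.2 :=
        Bool.eq_not_iff.2 (fun h => h13 (Prod.ext hA h.symm))
      exact Prod.ext hA.symm h3'
    have h4 : y₄ = (y₂.1, !y₂.2) := by
      have h4' : y₄.2 = !y₂.2 :=
        Bool.eq_not_iff.2 (fun h => h24 (Prod.ext hB h.symm))
      exact Prod.ext hB.symm h4'
    have hne : y₁.1 ≠ y₂.1 := by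
      intro hE
      apply h23
      rw [h3]
      have h2' : y₂.2 = !y₁.2 :=
        Bool.eq_not_iff.2 (fun h => h12 (Prod.ext hE h.symm))
      exact Prod.ext hE.symm h2'
    have d13 : exDist a b c y₁ y₃ = 1 := by
      rw [sixPt.same a b c hA, if_neg (fun h => h13 (Prod.ext hA h))]
    have d24 : exDist a b c y₂ y₄ = 1 := by
      rw [sixPt.same a b c hB, if_neg (fun h => h24 (Prod.ext hB h))]
    have e1 : exDist a b c y₁ y₂ * exDist a b c y₃ y₄ = 1/2 := by
      rw [h3, h4]; exact sixPt.antip H hne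
    have e2 : exDist a b c y₂ y₃ * exDist a b c y₄ y₁ = 1/2 := by
      have hne2 : y₂.1 ≠ y₃.1 := by rw [h3]; exact fun h => hne h.symm
      have key := sixPt.antip H hne2
      have hy4 : (y₂.1, !y₂.2) = y₄ := h4.symm
      have hy1 : (y₃.1, !y₃.2) = y₁ := by rw [h3]; simp
      rw [hy4, hy1] at key
      exact key
    rw [d13, d24, e1, e2]; norm_num
  · rcases not_and_or.1 hd with h | h
    · have hle := (sixPt.cross H h).2
      have h1 := mul_le_mul hle (sixPt.ub H y₂ y₄) (sixPt.nonneg H y₂ y₄) (by norm_num)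
      have h2 := mul_le_mul (sixPt.lb H h12) (sixPt.lb H h34) (by norm_num)
        (sixPt.nonneg H y₁ y₂)
      have h3 := mul_le_mul (sixPt.lb H h23) (sixPt.lb H h41)
        (by norm_num) (sixPt.nonneg H y₂ y₃)
      linarith
    · have hle := (sixPt.cross H h).2
      have h1 := mul_le_mul (sixPt.ub H y₁ y₃) hle (sixPt.nonneg H y₂ y₄)
        (by norm_num)
      have h2 := mul_le_mul (sixPt.lb H h12) (sixPt.lb H h34) (by norm_num)
        (sixPt.nonneg H y₁ y₂)
      have h3 := mul_le_mul (sixPt.lb H h23) (sixPt.lb H h41)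
        (by norm_num) (sixPt.nonneg H y₂ y₃)
      linarith

end

lemma sixPt.key (t : ℝ) (ht : 0 < t) :
    (1:ℝ) = t / Real.sqrt 2 * ((Real.sqrt 2)⁻¹ * t⁻¹) +
      (Real.sqrt 2)⁻¹ * t⁻¹ * (t / Real.sqrt 2) := by
  have hs : Real.sqrt 2 * Real.sqrt 2 = 2 := Real.mul_self_sqrt (by norm_num)
  have hs0 : (0:ℝ) < Real.sqrt 2 := Real.sqrt_pos.2 (by norm_num)
  field_simp
  linear_combination hs

theorem six_point_example :
    ∃ ε : ℝ, 0 < ε ∧ ∀ a b c : ℝ, |a - 1| < ε → |b - 1| < ε → |c - 1| < ε →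
      (∀ p q, 0 ≤ exDist a b c p q) ∧
      (∀ p q, exDist a b c p q = exDist a b c q p) ∧
      (∀ p q, exDist a b c p q = 0 ↔ p = q) ∧
      (∀ p q r, exDist a b c p r ≤ exDist a b c p q + exDist a b c q r) ∧
      (∀ y₁ y₂ y₃ y₄, exDist a b c y₁ y₃ * exDist a b c y₂ y₄ ≤
        exDist a b c y₁ y₂ * exDist a b c y₃ y₄ +
          exDist a b c y₂ y₃ * exDist a b c y₄ y₁) ∧
      (exDist a b c (0, true) (0, false) * exDist a b c (1, true) (1, false) =
        exDist a b c (0, true) (1, true) * exDist a b c (0, false) (1, false) +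
          exDist a b c (1, true) (0, false) * exDist a b c (1, false) (0, true)) ∧
      (exDist a b c (1, true) (1, false) * exDist a b c (2, true) (2, false) =
        exDist a b c (1, true) (2, true) * exDist a b c (1, false) (2, false) +
          exDist a b c (2, true) (1, false) * exDist a b c (2, false) (1, true)) ∧
      (exDist a b c (2, true) (2, false) * exDist a b c (0, true) (0, false) =
        exDist a b c (2, true) (0, true) * exDist a b c (2, false) (0, false) +
          exDist a b c (0, true) (2, false) * exDist a b c (0, false) (2, true)) := by
  refine ⟨1/100, by norm_num, fun a b c ha hb hc => ?_⟩
  rw [abs_lt] at ha hb hc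
  have ha0 : 0 < a := by linarith
  have hb0 : 0 < b := by linarith
  have hc0 : 0 < c := by linarith
  have H : ∀ i : Fin 3, 99/100 < ![a,b,c] i ∧ ![a,b,c] i < 101/100 := by
    intro i
    fin_cases i <;> simp <;> constructor <;> linarith
  refine ⟨sixPt.nonneg H, sixPt.symm a b c, fun p q => sixPt.eq_zero H,
    sixPt.triangle H, sixPt.ptolemy H, ?_, ?_, ?_⟩
  · simp (config := { decide := true }) only [exDist]
    norm_num
    exact sixPt.key a ha0
  · simp (config := { decide := true }) only [exDist]
    norm_num
    exact sixPt.key b hb0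
  · simp (config := { decide := true }) only [exDist]
    norm_num
    exact sixPt.key c hc0
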